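/- Branchless offset computation is correct: for a block of m elements a[0..m-1] and pivot p, the loop 'num = 0; for i in 0..m-1: offsets[num] = i; num += (a[i] ≥ p)' terminates with num equal to the number of indices i with a[i] ≥ p, and offsets[0..num-1] equal to those indices in increasing order. -/

import Mathlib

variable {α : Type*} [LinearOrder α]

/-- One iteration of the branchless offset loop: unconditionally write the
current index into `offsets[num]`, then increment `num` by 1 if `a[i] ≥ p`
and by 0 otherwise. -/
def offsetStep (a : ℕ → α) (p : α) (st : Array ℕ × ℕ) (i : ℕ) : Array ℕ × ℕ :=
  (st.1.set! st.2 i, st.2 + if p ≤ a i then 1 else 0)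

/-- Running the loop for `i = 0, …, m-1`. -/
def offsetRun (a : ℕ → α) (p : α) (m : ℕ) (offsets0 : Array ℕ) : Array ℕ × ℕ :=
  (List.range m).foldl (offsetStep a p) (offsets0, 0)

private lemma toList_set!_of_lt (b : Array ℕ) (i v : ℕ) (h : i < b.size) :
    (b.set! i v).toList = b.toList.set i v := by
  rw [Array.toList_set!]

private lemma offsetRun_aux (a : ℕ → α) (p : α) (offsets0 : Array ℕ) :
    ∀ m : ℕ, m ≤ offsets0.size →
    (offsetRun a p m offsets0).1.size = offsets0.size ∧
    (offsetRun a p m offsets0).2 =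
      ((List.range m).filter (fun i => p ≤ a i)).length ∧
    ((offsetRun a p m offsets0).1.toList.take (offsetRun a p m offsets0).2) =
      (List.range m).filter (fun i => p ≤ a i) := by
  intro m
  induction m with
  | zero => intro _; simp [offsetRun]
  | succ m ih =>
    intro hm
    have hm' : m ≤ offsets0.size := Nat.le_of_succ_le hm
    obtain ⟨hsize, hnum, htake⟩ := ih hm'
    set st := offsetRun a p m offsets0 with hst
    have hrun : offsetRun a p (m + 1) offsets0 = offsetStep a p st m := by
      rw [offsetRun, List.range_succ, List.foldl_append]; rfl
    have hnum_le : st.2 ≤ m := by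
      rw [hnum]
      calc ((List.range m).filter (fun i => p ≤ a i)).length
          ≤ (List.range m).length := List.length_filter_le _ _
        _ = m := List.length_range
    have hnum_lt : st.2 < st.1.size := by
      rw [hsize]; exact lt_of_le_of_lt hnum_le hm
    have hlen : st.1.toList.length = st.1.size := Array.length_toList
    have hnum_lt' : st.2 < st.1.toList.length := by rw [hlen]; exact hnum_lt
    have hfilter : (List.range (m + 1)).filter (fun i => p ≤ a i) =
        (List.range m).filter (fun i => p ≤ a i) ++
          if p ≤ a m then [m] else [] := by
      rw [List.range_succ, List.filter_append]
      by_cases h : p ≤ a m <;> simp [h]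
    have hset : (offsetStep a p st m).1.toList = st.1.toList.set st.2 m :=
      toList_set!_of_lt _ _ _ hnum_lt
    have hsetsize : (offsetStep a p st m).1.size = offsets0.size := by
      rw [offsetStep]; simpa using hsize
    refine ⟨by rw [hrun]; exact hsetsize, ?_, ?_⟩ <;> rw [hrun, hfilter]
    · by_cases h : p ≤ a m <;>
        simp [offsetStep, h, hnum]
    · by_cases h : p ≤ a m
      · have : (offsetStep a p st m).2 = st.2 + 1 := by simp [offsetStep, h]
        rw [hset, List.set_eq_take_cons_drop _ hnum_lt', this,
          List.take_append]
        have hlt : st.2 + 1 - (st.1.toList.take st.2).length = 1 := by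
          simp [List.length_take, Nat.min_eq_left (le_of_lt hnum_lt'), Nat.min_eq_left (le_of_lt hnum_lt)]
        rw [List.take_of_length_le (by simp [Nat.min_eq_left (le_of_lt hnum_lt')]),
          hlt, htake]
        simp [h]
      · have : (offsetStep a p st m).2 = st.2 := by simp [offsetStep, h]
        rw [hset, List.set_eq_take_cons_drop _ hnum_lt', this,
          List.take_append]
        have h0 : st.2 - (st.1.toList.take st.2).length = 0 := by
          simp [List.length_take, Nat.min_eq_left (le_of_lt hnum_lt'), Nat.min_eq_left (le_of_lt hnum_lt)]
        rw [List.take_of_length_le (by simp [Nat.min_eq_left (le_of_lt hnum_lt')]),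
          h0, htake]
        simp [h]

/-- Correctness of BlockQuicksort's branchless offset computation: the loop
terminates with `num` equal to the number of indices `i < m` with `a[i] ≥ p`,
and `offsets[0..num-1]` equal to those indices in increasing order. -/
theorem offsetRun_correct (a : ℕ → α) (p : α) (m : ℕ) (offsets0 : Array ℕ)
    (hsize : m ≤ offsets0.size) :
    (offsetRun a p m offsets0).2 =
      ((List.range m).filter (fun i => p ≤ a i)).length ∧
    ((offsetRun a p m offsets0).1.toList.take (offsetRun a p m offsets0).2) =
      (List.range m).filter (fun i => p ≤ a i) := by
  obtain ⟨_, h2, h3⟩ := offsetRun_aux a p offsets0 m hsize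
  exact ⟨h2, h3⟩
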